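/- The Generous Scoring norm GSCO, defined by S(·,G)=C, S(·,B)=D, R(·,·,C)=1, R(·,·,D)=1 − c/((1−2μ)b), satisfies the equalizer condition [R̃(X,Y,C) − R̃(X,Y,D)]·Δv = c for all contexts (X,Y), where R̃ = (1−μ)R + μ(1−R) and Δv = b. In particular, R̃(X,Y,C) − R̃(X,Y,D) = c/b for all X,Y. -/

import Mathlib

/-- Generous Scoring (GSCO): `R(·,·,C) = 1`, `R(·,·,D) = 1 - c/((1-2μ)b)`.
With `R̃ = (1-μ)R + μ(1-R)` and `Δv = b`, the equalizer condition
`[R̃(X,Y,C) - R̃(X,Y,D)]·Δv = c` holds in every context, and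
`R̃(X,Y,C) - R̃(X,Y,D) = c/b`. -/
theorem stmt_11 (μ b c Δv : ℝ)
    (hμ0 : 0 < μ) (hμ : μ < 1/2) (hc : 0 < c) (hcb : c < (1 - 2 * μ) * b)
    (tilde : ℝ → ℝ) (htilde : ∀ R : ℝ, tilde R = (1 - μ) * R + μ * (1 - R))
    (RC RD : Bool → Bool → ℝ)
    (hRC : ∀ X Y : Bool, RC X Y = 1)
    (hRD : ∀ X Y : Bool, RD X Y = 1 - c / ((1 - 2 * μ) * b))
    (hΔv : Δv = b) :
    (∀ X Y : Bool, (tilde (RC X Y) - tilde (RD X Y)) * Δv = c) ∧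
    (∀ X Y : Bool, tilde (RC X Y) - tilde (RD X Y) = c / b) := by
  have h1 : (0:ℝ) < 1 - 2 * μ := by linarith
  have hb : (0:ℝ) < b := by
    by_contra h
    push_neg at h
    nlinarith
  have key : ∀ X Y : Bool, tilde (RC X Y) - tilde (RD X Y) = c / b := by
    intro X Y
    rw [htilde, htilde, hRC, hRD]
    field_simp [show (1:ℝ) - μ * 2 ≠ 0 by linarith]
    ring
  refine ⟨fun X Y => ?_, key⟩
  rw [key, hΔv, div_mul_cancel₀ _ hb.ne']
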